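/- The category of Petri nets is cocomplete (has all small colimits). -/

import Mathlib

open CategoryTheory

/-- A Petri net: sets of transitions and places with source and target functions
valued in the free commutative monoid `ℕ[S] = S →₀ ℕ` on places. -/
structure PetriNet : Type 1 where
  T : Type
  S : Type
  src : T → (S →₀ ℕ)
  tgt : T → (S →₀ ℕ)

/-- A morphism of Petri nets: functions on transitions and places commuting with
source and target via the induced homomorphism `ℕ[g] = Finsupp.mapDomain g`. -/
@[ext]
structure PetriHom (P Q : PetriNet) where
  ft : P.T → Q.T
  fs : P.S → Q.S
  hsrc : ∀ τ, Q.src (ft τ) = Finsupp.mapDomain fs (P.src τ)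
  htgt : ∀ τ, Q.tgt (ft τ) = Finsupp.mapDomain fs (P.tgt τ)

/-- The category `Petri` of Petri nets. -/
instance : Category PetriNet where
  Hom := PetriHom
  id P := ⟨id, id, fun τ => by simp [Finsupp.mapDomain_id], fun τ => by simp [Finsupp.mapDomain_id]⟩
  comp {P Q R} f g :=
    ⟨g.ft ∘ f.ft, g.fs ∘ f.fs,
      fun τ => by simp [Function.comp, g.hsrc, f.hsrc, Finsupp.mapDomain_comp],
      fun τ => by simp [Function.comp, g.htgt, f.htgt, Finsupp.mapDomain_comp]⟩
  id_comp f := rfl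
  comp_id f := rfl
  assoc f g h := rfl

namespace PetriColim

open Limits

variable {J : Type} [Category J] (F : J ⥤ PetriNet)

/-- Relation on the disjoint union of transition sets. -/
def TRel (x y : Σ j : J, (F.obj j).T) : Prop := ∃ f : x.1 ⟶ y.1, (F.map f).ft x.2 = y.2

/-- Relation on the disjoint union of place sets. -/
def SRel (x y : Σ j : J, (F.obj j).S) : Prop := ∃ f : x.1 ⟶ y.1, (F.map f).fs x.2 = y.2

/-- Colimit of transitions. -/
def QT := Quot (TRel F)

/-- Colimit of places. -/
def QS := Quot (SRel F)

/-- Canonical inclusion into the colimit of places. -/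
def ιS (j : J) (s : (F.obj j).S) : QS F := Quot.mk _ ⟨j, s⟩

lemma ιS_comm {j j' : J} (f : j ⟶ j') (s : (F.obj j).S) :
    ιS F j' ((F.map f).fs s) = ιS F j s :=
  (Quot.sound ⟨f, rfl⟩).symm

lemma src_compat {j j' : J} (f : j ⟶ j') (τ : (F.obj j).T) :
    Finsupp.mapDomain (ιS F j') ((F.obj j').src ((F.map f).ft τ)) =
      Finsupp.mapDomain (ιS F j) ((F.obj j).src τ) := by
  rw [(F.map f).hsrc, ← Finsupp.mapDomain_comp]
  congr 1
  funext s
  exact ιS_comm F f s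

lemma tgt_compat {j j' : J} (f : j ⟶ j') (τ : (F.obj j).T) :
    Finsupp.mapDomain (ιS F j') ((F.obj j').tgt ((F.map f).ft τ)) =
      Finsupp.mapDomain (ιS F j) ((F.obj j).tgt τ) := by
  rw [(F.map f).htgt, ← Finsupp.mapDomain_comp]
  congr 1
  funext s
  exact ιS_comm F f s

/-- Source map on the colimit. -/
noncomputable def csrc : QT F → (QS F →₀ ℕ) :=
  Quot.lift (fun p => Finsupp.mapDomain (ιS F p.1) ((F.obj p.1).src p.2)) (by
    rintro ⟨j, τ⟩ ⟨j', τ'⟩ ⟨f, hf⟩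
    dsimp only at hf ⊢
    rw [← hf]
    exact (src_compat F f τ).symm)

/-- Target map on the colimit. -/
noncomputable def ctgt : QT F → (QS F →₀ ℕ) :=
  Quot.lift (fun p => Finsupp.mapDomain (ιS F p.1) ((F.obj p.1).tgt p.2)) (by
    rintro ⟨j, τ⟩ ⟨j', τ'⟩ ⟨f, hf⟩
    dsimp only at hf ⊢
    rw [← hf]
    exact (tgt_compat F f τ).symm)

/-- The colimit Petri net. -/
noncomputable def colimNet : PetriNet where
  T := QT F
  S := QS F
  src := csrc F
  tgt := ctgt F

/-- The cocone legs. -/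
noncomputable def ιHom (j : J) : F.obj j ⟶ colimNet F where
  ft τ := Quot.mk _ ⟨j, τ⟩
  fs := ιS F j
  hsrc τ := rfl
  htgt τ := rfl

/-- The colimit cocone. -/
noncomputable def colimCocone : Cocone F where
  pt := colimNet F
  ι :=
    { app := ιHom F
      naturality := by
        intro j j' f
        apply PetriHom.ext
        · funext τ
          exact (Quot.sound ⟨f, rfl⟩).symm
        · funext s
          exact (Quot.sound ⟨f, rfl⟩).symm }

/-- The descent morphism. -/
noncomputable def descHom (c : Cocone F) : colimNet F ⟶ c.pt where
  ft := Quot.lift (fun p => (c.ι.app p.1).ft p.2) (by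
    rintro ⟨j, τ⟩ ⟨j', τ'⟩ ⟨f, hf⟩
    dsimp only at hf ⊢
    rw [← hf]
    exact (congrFun (congrArg PetriHom.ft (c.w f)) τ).symm)
  fs := Quot.lift (fun p => (c.ι.app p.1).fs p.2) (by
    rintro ⟨j, s⟩ ⟨j', s'⟩ ⟨f, hf⟩
    dsimp only at hf ⊢
    rw [← hf]
    exact (congrFun (congrArg PetriHom.fs (c.w f)) s).symm)
  hsrc := by
    refine Quot.ind ?_
    rintro ⟨j, τ⟩
    show c.pt.src ((c.ι.app j).ft τ) =
      Finsupp.mapDomain _ (Finsupp.mapDomain (ιS F j) ((F.obj j).src τ))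
    refine ((c.ι.app j).hsrc τ).trans ?_
    exact Finsupp.mapDomain_comp (f := ιS F j) (g := Quot.lift (β := c.pt.S) (fun p : Σ j : J, (F.obj j).S => (c.ι.app p.1).fs p.2) _)
  htgt := by
    refine Quot.ind ?_
    rintro ⟨j, τ⟩
    show c.pt.tgt ((c.ι.app j).ft τ) =
      Finsupp.mapDomain _ (Finsupp.mapDomain (ιS F j) ((F.obj j).tgt τ))
    refine ((c.ι.app j).htgt τ).trans ?_
    exact Finsupp.mapDomain_comp (f := ιS F j) (g := Quot.lift (β := c.pt.S) (fun p : Σ j : J, (F.obj j).S => (c.ι.app p.1).fs p.2) _)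

/-- The cocone is colimiting. -/
noncomputable def colimIsColimit : IsColimit (colimCocone F) where
  desc := descHom F
  fac c j := by
    apply PetriHom.ext <;> rfl
  uniq c m hm := by
    apply PetriHom.ext
    · funext t
      induction t using Quot.ind with
      | _ p =>
      obtain ⟨j, τ⟩ := p
      exact congrFun (congrArg PetriHom.ft (hm j)) τ
    · funext s
      induction s using Quot.ind with
      | _ p =>
      obtain ⟨j, x⟩ := p
      exact congrFun (congrArg PetriHom.fs (hm j)) x

end PetriColim

/-- The category of Petri nets is cocomplete (has all small colimits). -/
theorem petri_cocomplete : Limits.HasColimits PetriNet := by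
  constructor
  intro J _
  constructor
  intro F
  exact Limits.HasColimit.mk ⟨PetriColim.colimCocone F, PetriColim.colimIsColimit F⟩
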